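/- arXiv:2512.13162 — 2 statements merged into one kernel-verified Lean document; each statement's English description precedes it below -/
import Mathlib

section
/- Let q be a prime power and let k, n, m be integers with 1 < k < n ≤ m. Let C be a nondegenerate [n,k]_{q^m/q} rank-metric code with minimum distance d (the least element of WS(C)). Set s = max{⌊n/2^{k−1}⌋, 1}. If |WS(C)| = n − s + 1 (i.e., C is L_rk-optimal), then C is not a maximum rank distance (MRD) code, i.e., d ≠ n − k + 1. -/
/-- The rank weight of a vector `v ∈ L^n`, where `L/K` is a field extension:
the `K`-dimension of the `K`-span of the entries of `v`. -/
noncomputable def rankWeight (K : Type*) [Field K] {L : Type*} [Field L] [Algebra K L]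
    {n : ℕ} (v : Fin n → L) : ℕ :=
  Module.finrank K (Submodule.span K (Set.range v))

/-- The weight spectrum of a rank-metric code `C ⊆ L^n`: the set of rank weights of its
nonzero codewords. -/
noncomputable def weightSpectrum (K : Type*) [Field K] {L : Type*} [Field L] [Algebra K L]
    {n : ℕ} (C : Submodule L (Fin n → L)) : Set ℕ :=
  {w | ∃ c ∈ C, c ≠ 0 ∧ rankWeight K c = w}

/-- A rank-metric code `C ⊆ L^n` is nondegenerate if for every nonzero `x ∈ K^n` there is a
codeword `c ∈ C` with `∑ j, x j • c j ≠ 0`. -/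
def IsNondegenerate (K : Type*) [Field K] {L : Type*} [Field L] [Algebra K L]
    {n : ℕ} (C : Submodule L (Fin n → L)) : Prop :=
  ∀ x : Fin n → K, x ≠ 0 → ∃ c ∈ C, (∑ j, x j • c j) ≠ 0

/-- Arithmetic helper: for `2 ≤ k < n` we have `n < (n - k + 1) * 2^(k-1)`. -/
lemma aux_arith : ∀ k n : ℕ, 2 ≤ k → k < n → n < (n - k + 1) * 2 ^ (k - 1) := by
  intro k
  induction k with
  | zero => omega
  | succ k ih =>
    intro n h2 hkn
    rcases Nat.lt_or_ge k 2 with h | h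
    · have hk1 : k = 1 := by omega
      subst hk1
      norm_num
      omega
    · have hih := ih n h (by omega)
      have h2k : 2 ^ (k - 1) * 2 = 2 ^ k := by
        rw [← pow_succ]
        congr 1
        omega
      have hnk : n - (k + 1) + 1 = n - k := by omega
      have hle : (n - k + 1) * 2 ^ (k - 1) ≤ (n - (k + 1) + 1) * 2 ^ (k + 1 - 1) := by
        have h1 : n - k + 1 ≤ (n - k) * 2 := by omega
        calc (n - k + 1) * 2 ^ (k - 1) ≤ (n - k) * 2 * 2 ^ (k - 1) :=
              Nat.mul_le_mul_right _ h1
          _ = (n - (k + 1) + 1) * 2 ^ (k + 1 - 1) := by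
              rw [hnk, Nat.add_sub_cancel, mul_assoc, mul_comm 2 (2 ^ (k - 1)), h2k]
      exact lt_of_lt_of_le hih hle

/-- The rank weight of a vector in `L^n` is at most `n`. -/
lemma rankWeight_le (K : Type*) [Field K] {L : Type*} [Field L] [Algebra K L]
    {n : ℕ} (v : Fin n → L) : rankWeight K v ≤ n := by
  classical
  have h1 := finrank_span_le_card (R := K) (Set.range v)
  have h2 : (Set.range v).toFinset.card ≤ n := by
    rw [Set.toFinset_card]
    simpa using Fintype.card_range_le v
  exact le_trans h1 h2

/-- An L_rk-optimal nondegenerate [n,k]_{q^m/q} code with 1 < k < n ≤ m is not MRD: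
its minimum distance d satisfies d ≠ n − k + 1. -/
theorem Lrk_optimal_not_MRD_of_le (q m n k : ℕ) (hq : IsPrimePow q)
    (hk : 1 < k) (hkn : k < n) (hnm : n ≤ m)
    (K L : Type) [Field K] [Fintype K] [Field L] [Algebra K L]
    (hcard : Fintype.card K = q) (hdeg : Module.finrank K L = m)
    (C : Submodule L (Fin n → L)) (hdim : Module.finrank L C = k)
    (hnd : IsNondegenerate K C)
    (d : ℕ) (hd : IsLeast (weightSpectrum K C) d)
    (hopt : (weightSpectrum K C).ncard = n - max (n / 2 ^ (k - 1)) 1 + 1) :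
    d ≠ n - k + 1 := by
  intro hdeq
  -- WS ⊆ [d, n]
  have hsub : weightSpectrum K C ⊆ Set.Icc d n := by
    rintro w ⟨c, hc, hc0, rfl⟩
    exact ⟨hd.2 ⟨c, hc, hc0, rfl⟩, rankWeight_le K c⟩
  have hdn : d ≤ n := (hsub hd.1).2
  -- |WS| ≤ n + 1 - d
  have hcard_le : (weightSpectrum K C).ncard ≤ n + 1 - d := by
    have h1 : (weightSpectrum K C).ncard ≤ (Set.Icc d n).ncard :=
      Set.ncard_le_ncard hsub (Set.finite_Icc d n)
    have h2 : (Set.Icc d n).ncard = n + 1 - d := by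
      rw [← Finset.coe_Icc, Set.ncard_coe_finset, Nat.card_Icc]
    omega
  -- s ≤ n - k
  have hdiv : n / 2 ^ (k - 1) ≤ n - k := by
    have harith := aux_arith k n hk hkn
    have hpos : 0 < 2 ^ (k - 1) := Nat.pow_pos (by norm_num)
    have := (Nat.div_lt_iff_lt_mul hpos).mpr harith
    omega
  have hs : max (n / 2 ^ (k - 1)) 1 ≤ n - k := max_le hdiv (by omega)
  omega
end

section
/- Let q be a prime power and let k, n, m be integers with 1 < k < n, m < n ≤ km, and assume m ≥ 4, or m = 3 and n ≥ 5. Set t = ⌊(km − n)/m⌋, a = n − (k − t − 2)m, and h = max{⌊a/2^{t+1}⌋, 1}. Let C be a nondegenerate [n,k]_{q^m/q} rank-metric code with |WS(C)| = m − h + 1 (i.e., C is L_rk-optimal). Then the dual code C⊥ is degenerate, or else n ≤ (n−k)m and |WS(C⊥)| ≠ m − h⊥ + 1, where t⊥ = ⌊((n−k)m − n)/m⌋, a⊥ = n − ((n−k) − t⊥ − 2)m, and h⊥ = max{⌊a⊥/2^{t⊥+1}⌋, 1}; in other words, C⊥ is degenerate or not L_rk-optimal. -/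
private lemma sq_lt_two_pow' (a : ℕ) (h : 5 ≤ a) : a * a < 2 ^ a := by
  induction a with
  | zero => omega
  | succ n ih =>
    rcases Nat.lt_or_ge n 5 with h5 | h5
    · have : n = 4 := by omega
      subst this; norm_num
    · have h1 := ih h5
      have h2 : 2 ^ (n+1) = 2 * 2^n := by ring
      nlinarith

private lemma arith_main' (m n k t a : ℕ) (hm3 : 3 ≤ m) (hk : 1 < k) (hkn : k < n)
    (hmn : m < n) (hkm : n ≤ k * m) (hm : 4 ≤ m ∨ (m = 3 ∧ 5 ≤ n))
    (ht : t = (k * m - n) / m) (ha : a = n - (k - t - 2) * m)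
    (hge : 2 ^ (t + 2) ≤ a) :
    n ≤ (n - k) * m ∧
      (n - ((n - k) - ((n - k) * m - n) / m - 2) * m) / 2 ^ (((n - k) * m - n) / m + 1) ≤ 1 := by
  have hm0 : 0 < m := by omega
  set ρ := (k * m - n) % m with hρdef
  have hρ : ρ < m := Nat.mod_lt _ hm0
  have hdm : m * t + ρ = k * m - n := by rw [ht, hρdef]; exact Nat.div_add_mod _ m
  have hsub : n + (k * m - n) = k * m := Nat.add_sub_cancel' hkm
  have hk1 : (k - 1) * m + 1 * m = k * m := by
    rw [← Nat.add_mul, Nat.sub_add_cancel (by omega : 1 ≤ k)]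
  have htlt : t < k - 1 := by
    rw [ht]
    rw [Nat.div_lt_iff_lt_mul hm0]
    omega
  have htk : t + 2 ≤ k := by omega
  have hE0 : (k - t) * m + t * m = k * m := by
    rw [← Nat.add_mul, Nat.sub_add_cancel (by omega : t ≤ k)]
  have hmt : m * t = t * m := Nat.mul_comm m t
  have hE1 : (k - t) * m = n + ρ := by omega
  have hc2 : 2 ≤ k - t := by
    by_contra hcon
    have h1 : (k - t) * m ≤ 1 * m := Nat.mul_le_mul_right m (by omega)
    omega
  have hE2a : (k - t - 2) * m + 2 * m = (k - t) * m := by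
    rw [← Nat.add_mul, Nat.sub_add_cancel hc2]
  have hEn : (k - t - 2) * m + a = n := by omega
  have hEa : a + ρ = 2 * m := by omega
  have ht4 : t + 4 ≤ 2 ^ (t + 2) := by
    have h1 : t + 1 < 2 ^ (t + 1) := Nat.lt_two_pow_self
    have h2 : 2 ^ (t + 2) = 2 * 2 ^ (t + 1) := by ring
    omega
  have hat : t + 4 ≤ a := le_trans ht4 hge
  have h3c : (k - t - 2) * 3 ≤ (k - t - 2) * m := Nat.mul_le_mul_left _ hm3
  have h3c' : (k - t - 2) * 3 + 2 * 3 = (k - t) * 3 := by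
    rw [← Nat.add_mul, Nat.sub_add_cancel hc2]
  have hck : (k - t) + k ≤ n := by omega
  have hE4 : ((n - k) - (k - t)) * m + (k - t) * m = (n - k) * m := by
    rw [← Nat.add_mul, Nat.sub_add_cancel (by omega : k - t ≤ n - k)]
  have goal1 : n ≤ (n - k) * m := by omega
  refine ⟨goal1, ?_⟩
  have hEt : (n - k) * m - n = ((n - k) - (k - t)) * m + ρ := by omega
  have htperp : ((n - k) * m - n) / m = (n - k) - (k - t) := by
    rw [hEt, Nat.mul_comm ((n - k) - (k - t)) m, Nat.mul_add_div hm0,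
      Nat.div_eq_of_lt hρ, Nat.add_zero]
  rw [htperp]
  have hnum : (n - k) - ((n - k) - (k - t)) - 2 = k - t - 2 := by omega
  rw [hnum]
  have hnum2 : n - (k - t - 2) * m = a := by omega
  rw [hnum2]
  have hQ : (k - t - 2) * (m - 2) + (k - t - 2) * 2 = (k - t - 2) * m := by
    rw [← Nat.mul_add, Nat.sub_add_cancel (by omega : 2 ≤ m)]
  set b := a - (t + 2) with hbdef
  have hb : t + 2 + b = a := by omega
  have hE5 : (n - k) - (k - t) + 2 = (k - t - 2) * (m - 2) + b := by omega
  have hkey : a < 2 ^ ((k - t - 2) * (m - 2) + b) := by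
    rcases Nat.lt_or_ge a 5 with ha5 | ha5
    · have ha4 : a = 4 := by omega
      have ht0 : t = 0 := by
        by_contra ht0
        have : 2 ^ 3 ≤ 2 ^ (t + 2) := Nat.pow_le_pow_right (by omega) (by omega)
        omega
      have hmm : m = 3 := by omega
      have hn5 : 5 ≤ n := by
        rcases hm with h4 | ⟨_, h5⟩
        · omega
        · exact h5
      have hq1 : 1 ≤ k - t - 2 := by
        subst hmm
        omega
      have : 2 ^ 3 ≤ 2 ^ ((k - t - 2) * (m - 2) + b) := by
        apply Nat.pow_le_pow_right (by omega)
        subst hmm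
        omega
      omega
    · have hsq : a * a < 2 ^ a := sq_lt_two_pow' a ha5
      have hpa : 2 ^ a = 2 ^ (t + 2) * 2 ^ b := by rw [← pow_add, hb]
      have hlt : a * a < a * 2 ^ b := by
        calc a * a < 2 ^ a := hsq
        _ = 2 ^ (t + 2) * 2 ^ b := hpa
        _ ≤ a * 2 ^ b := Nat.mul_le_mul_right _ hge
      have hab : a < 2 ^ b := Nat.lt_of_mul_lt_mul_left hlt
      calc a < 2 ^ b := hab
      _ ≤ 2 ^ ((k - t - 2) * (m - 2) + b) := Nat.pow_le_pow_right (by omega) (by omega)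
  have h2p : 0 < 2 ^ ((n - k) - (k - t) + 1) := Nat.pow_pos (by omega)
  have hfin : a / 2 ^ ((n - k) - (k - t) + 1) < 2 := by
    rw [Nat.div_lt_iff_lt_mul h2p]
    calc a < 2 ^ ((k - t - 2) * (m - 2) + b) := hkey
    _ = 2 ^ ((n - k) - (k - t) + 2) := by rw [← hE5]
    _ = 2 * 2 ^ ((n - k) - (k - t) + 1) := by ring
  omega

private lemma rankWeight_pos' {K L : Type} [Field K] [Field L] [Algebra K L]
    {n : ℕ} {v : Fin n → L} [FiniteDimensional K L] (hv : v ≠ 0) :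
    0 < rankWeight K v := by
  obtain ⟨j, hj⟩ : ∃ j, v j ≠ 0 := by
    by_contra hcon; push_neg at hcon; exact hv (funext hcon)
  have hmem : v j ∈ Submodule.span K (Set.range v) :=
    Submodule.subset_span (Set.mem_range_self j)
  have : Nontrivial (Submodule.span K (Set.range v)) :=
    ⟨⟨⟨v j, hmem⟩, 0, fun h => hj (by simpa using congrArg Subtype.val h)⟩⟩
  exact Module.finrank_pos

private lemma weight_one_rep' {K L : Type} [Field K] [Field L] [Algebra K L]
    {n : ℕ} {v : Fin n → L} (hv : v ≠ 0) (h1 : rankWeight K v = 1) :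
    ∃ (x : Fin n → K) (lam : L), x ≠ 0 ∧ lam ≠ 0 ∧ ∀ j, v j = x j • lam := by
  have h1' : Module.finrank K (Submodule.span K (Set.range v)) = 1 := h1
  obtain ⟨w, hw0, hw⟩ := finrank_eq_one_iff'.mp h1'
  choose x hx using fun j => hw ⟨v j, Submodule.subset_span (Set.mem_range_self j)⟩
  have hrep : ∀ j, v j = x j • (w : L) := by
    intro j
    have := congrArg Subtype.val (hx j)
    simpa using this.symm
  refine ⟨x, (w : L), ?_, ?_, hrep⟩
  · intro hx0
    apply hv
    funext j
    rw [hrep j, congrFun hx0 j]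
    simp
  · intro hl0
    exact hw0 (by ext; simpa using hl0)

/-- Duality, case n > m (with m ≥ 4, or m = 3 and n ≥ 5): if C is a nondegenerate
L_rk-optimal [n,k]_{q^m/q} code, then its dual code D = C⊥ is degenerate, or else
n ≤ (n−k)m and D is not L_rk-optimal. -/
theorem dual_not_Lrk_optimal_of_gt (q m n k t a h : ℕ) (hq : IsPrimePow q)
    (hk : 1 < k) (hkn : k < n) (hmn : m < n) (hkm : n ≤ k * m)
    (hm : 4 ≤ m ∨ (m = 3 ∧ 5 ≤ n))
    (ht : t = (k * m - n) / m) (ha : a = n - (k - t - 2) * m)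
    (hh : h = max (a / 2 ^ (t + 1)) 1)
    (K L : Type) [Field K] [Fintype K] [Field L] [Algebra K L]
    (hcard : Fintype.card K = q) (hdeg : Module.finrank K L = m)
    (C D : Submodule L (Fin n → L))
    (hdim : Module.finrank L C = k) (hnd : IsNondegenerate K C)
    (hD : ∀ d : Fin n → L, d ∈ D ↔ ∀ c ∈ C, (∑ j, c j * d j) = 0)
    (hopt : (weightSpectrum K C).ncard = m - h + 1) :
    ¬ IsNondegenerate K D ∨
      (n ≤ (n - k) * m ∧
        (weightSpectrum K D).ncard ≠
          m - max ((n - ((n - k) - ((n - k) * m - n) / m - 2) * m) /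
            2 ^ (((n - k) * m - n) / m + 1)) 1 + 1) := by
  have hm3 : 3 ≤ m := by rcases hm with h4 | ⟨h3, _⟩ <;> omega
  haveI : FiniteDimensional K L := FiniteDimensional.of_finrank_pos (by rw [hdeg]; omega)
  rcases Nat.lt_or_ge (a / 2 ^ (t + 1)) 2 with hcase | hcase
  · -- h = 1 : full weight spectrum, C has a weight-one codeword, D is degenerate
    left
    have h1 : h = 1 := by rw [hh, Nat.max_eq_right (by omega)]
    rw [h1] at hopt
    have hsubset : weightSpectrum K C ⊆ Set.Icc 1 m := by
      rintro w ⟨c, hcC, hcne, rfl⟩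
      refine ⟨rankWeight_pos' hcne, ?_⟩
      rw [← hdeg]
      exact Submodule.finrank_le _
    have hIcc : (Set.Icc 1 m).ncard = m := by
      rw [← Finset.coe_Icc, Set.ncard_coe_finset, Nat.card_Icc]; omega
    have heq : weightSpectrum K C = Set.Icc 1 m :=
      Set.eq_of_subset_of_ncard_le hsubset (by omega) (Set.finite_Icc _ _)
    have h1mem : (1 : ℕ) ∈ weightSpectrum K C := by
      rw [heq]
      exact ⟨le_refl 1, by omega⟩
    obtain ⟨c, hcC, hcne, hc1⟩ := h1mem
    obtain ⟨x, lam, hx, hlam, hrep⟩ := weight_one_rep' hcne hc1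
    intro hND
    obtain ⟨d, hdD, hne⟩ := hND x hx
    apply hne
    have h0 : ∑ j, c j * d j = 0 := (hD d).1 hdD c hcC
    have hsum : ∑ j, c j * d j = lam * ∑ j, x j • d j := by
      rw [Finset.mul_sum]
      apply Finset.sum_congr rfl
      intro j _
      rw [hrep j, smul_mul_assoc, mul_smul_comm]
    rw [hsum] at h0
    exact (mul_eq_zero.mp h0).resolve_left hlam
  · -- h ≥ 2 : arithmetic forces the dual target to be m, but 1 ∉ WS(D)
    right
    have hge : 2 ^ (t + 2) ≤ a := by
      have h1 := (Nat.le_div_iff_mul_le (Nat.pow_pos (n := t + 1) (by omega))).mp hcase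
      have h2 : 2 ^ (t + 2) = 2 * 2 ^ (t + 1) := by ring
      omega
    obtain ⟨g1, g2⟩ := arith_main' m n k t a hm3 hk hkn hmn hkm hm ht ha hge
    refine ⟨g1, ?_⟩
    have hmax : max ((n - ((n - k) - ((n - k) * m - n) / m - 2) * m) /
        2 ^ (((n - k) * m - n) / m + 1)) 1 = 1 := Nat.max_eq_right g2
    rw [hmax]
    -- every nonzero codeword of D has weight at least 2 (C nondegenerate) and at most m
    have hsubset : weightSpectrum K D ⊆ Set.Icc 2 m := by
      rintro w ⟨d, hdD, hdne, rfl⟩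
      constructor
      · by_contra hlt
        push_neg at hlt
        have hpos : 0 < rankWeight K d := rankWeight_pos' hdne
        have hw1 : rankWeight K d = 1 := by omega
        obtain ⟨x, lam, hx, hlam, hrep⟩ := weight_one_rep' hdne hw1
        obtain ⟨c, hcC, hne⟩ := hnd x hx
        apply hne
        have h0 : ∑ j, c j * d j = 0 := (hD d).1 hdD c hcC
        have hsum : ∑ j, c j * d j = (∑ j, x j • c j) * lam := by
          rw [Finset.sum_mul]
          apply Finset.sum_congr rfl
          intro j _
          rw [hrep j, mul_smul_comm, smul_mul_assoc]
        rw [hsum] at h0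
        exact (mul_eq_zero.mp h0).resolve_right hlam
      · rw [← hdeg]
        exact Submodule.finrank_le _
    have hIcc : (Set.Icc 2 m).ncard = m - 1 := by
      rw [← Finset.coe_Icc, Set.ncard_coe_finset, Nat.card_Icc]; omega
    have hle : (weightSpectrum K D).ncard ≤ m - 1 := by
      rw [← hIcc]
      exact Set.ncard_le_ncard hsubset (Set.finite_Icc _ _)
    omega
end
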